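/- Fix β ∈ (0,1) and let ψ_β(t) := exp((log t)^β) for t ≥ e. Then: (a) for every a > 1, lim_{t→∞} ψ_β(at)/ψ_β(t) = 1, i.e. lim_{t→∞} exp((log(at))^β − (log t)^β) = 1; (b) the limit lim_{t→∞} ψ_β(t·ψ_β(t))/ψ_β(t) = lim_{t→∞} exp((log t + (log t)^β)^β − (log t)^β) equals 1 if β ∈ (0,1/2), equals e^{1/2} if β = 1/2, and equals +∞ if β ∈ (1/2,1); (c) for every α > 1, lim_{t→∞} ψ_β(t^α)/ψ_β(t) = lim_{t→∞} exp((α^β − 1)(log t)^β) = +∞. -/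

import Mathlib

open Filter Set Topology

-- upper bound: (x+c)^β ≤ x^β + β*c*x^(β-1)
lemma key_up {β c x : ℝ} (hβ0 : 0 < β) (hβ1 : β ≤ 1) (hc : 0 ≤ c) (hx : 1 ≤ x) :
    (x + c) ^ β ≤ x ^ β + β * c * x ^ (β - 1) := by
  have hx0 : (0:ℝ) < x := lt_of_lt_of_le one_pos hx
  have h1 : x + c = x * (1 + c / x) := by field_simp
  have h2 : (x * (1 + c / x)) ^ β = x ^ β * (1 + c / x) ^ β :=
    Real.mul_rpow hx0.le (by positivity)
  have h3 : (1 + c / x) ^ β ≤ 1 + β * (c / x) :=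
    rpow_one_add_le_one_add_mul_self (le_trans (by norm_num) (div_nonneg hc hx0.le)) hβ0.le hβ1
  have h4 : x ^ (β - 1) = x ^ β / x := by
    rw [Real.rpow_sub hx0, Real.rpow_one]
  rw [h1, h2, h4]
  calc x ^ β * (1 + c / x) ^ β ≤ x ^ β * (1 + β * (c / x)) :=
        mul_le_mul_of_nonneg_left h3 (Real.rpow_nonneg hx0.le β)
    _ = x ^ β + β * c * (x ^ β / x) := by field_simp

-- lower bound for the (b) exponent
lemma key_low {β x : ℝ} (hβ0 : 0 < β) (hβ1 : β ≤ 1) (hx : 1 ≤ x) :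
    β * x ^ (2 * β - 1) / (1 + x ^ (β - 1)) ≤ (x + x ^ β) ^ β - x ^ β := by
  have hx0 : (0:ℝ) < x := lt_of_lt_of_le one_pos hx
  set u := x ^ (β - 1) with hu
  have hu0 : 0 ≤ u := Real.rpow_nonneg hx0.le _
  have hu1 : 0 < 1 + u := by linarith
  have hxu : x * u = x ^ β := by
    rw [hu, show x * x ^ (β - 1) = x ^ (1:ℝ) * x ^ (β - 1) by rw [Real.rpow_one],
      ← Real.rpow_add hx0]
    norm_num
  have hsplit : x + x ^ β = x * (1 + u) := by rw [mul_add, mul_one, hxu]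
  -- Bernoulli lower: (1+u)^(1+β) ≥ 1 + (1+β)*u
  have hb : 1 + (1 + β) * u ≤ (1 + u) ^ (1 + β) :=
    one_add_mul_self_le_rpow_one_add (by linarith) (by linarith)
  have hpow : (1 + u) ^ (1 + β) = (1 + u) * (1 + u) ^ β := by
    rw [Real.rpow_add hu1, Real.rpow_one]
  have hkey : 1 + β * u / (1 + u) ≤ (1 + u) ^ β := by
    rw [hpow] at hb
    calc 1 + β * u / (1 + u) = (1 + (1 + β) * u) / (1 + u) := by field_simp; ring
      _ ≤ ((1 + u) * (1 + u) ^ β) / (1 + u) := by gcongr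
      _ = (1 + u) ^ β := by field_simp
  have h2 : (x + x ^ β) ^ β = x ^ β * (1 + u) ^ β := by
    rw [hsplit, Real.mul_rpow hx0.le hu1.le]
  have hxb : 0 ≤ x ^ β := Real.rpow_nonneg hx0.le _
  have hx2b : x ^ β * u = x ^ (2 * β - 1) := by
    rw [hu, ← Real.rpow_add hx0]; ring_nf
  rw [h2]
  have := mul_le_mul_of_nonneg_left hkey hxb
  calc β * x ^ (2 * β - 1) / (1 + u) = x ^ β * (1 + β * u / (1 + u)) - x ^ β := by
        rw [← hx2b]; field_simp; ring
    _ ≤ x ^ β * (1 + u) ^ β - x ^ β := by linarith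

lemma xpow_bm1_to_zero {β : ℝ} (hβ1 : β < 1) :
    Tendsto (fun x : ℝ => x ^ (β - 1)) atTop (𝓝 0) := by
  have := tendsto_rpow_neg_atTop (show 0 < 1 - β by linarith)
  exact this.congr fun x => by rw [neg_sub]

lemma lim_exp_a {β c : ℝ} (hβ0 : 0 < β) (hβ1 : β < 1) (hc : 0 ≤ c) :
    Tendsto (fun x => (c + x) ^ β - x ^ β) atTop (𝓝 0) := by
  have hupper : Tendsto (fun x : ℝ => β * c * x ^ (β - 1)) atTop (𝓝 0) := by
    simpa using (xpow_bm1_to_zero hβ1).const_mul (β * c)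
  refine tendsto_of_tendsto_of_tendsto_of_le_of_le' tendsto_const_nhds hupper ?_ ?_
  · filter_upwards [eventually_ge_atTop 1] with x hx
    have hx0 : (0:ℝ) ≤ x := le_trans zero_le_one hx
    have : x ^ β ≤ (c + x) ^ β := Real.rpow_le_rpow hx0 (by linarith) hβ0.le
    linarith
  · filter_upwards [eventually_ge_atTop 1] with x hx
    have h := key_up hβ0 hβ1.le hc hx
    calc (c + x) ^ β - x ^ β = (x + c) ^ β - x ^ β := by rw [add_comm]
      _ ≤ β * c * x ^ (β - 1) := by linarith

lemma lim_b_lt {β : ℝ} (hβ0 : 0 < β) (hβ : β < 1/2) :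
    Tendsto (fun x : ℝ => (x + x ^ β) ^ β - x ^ β) atTop (𝓝 0) := by
  have hupper : Tendsto (fun x : ℝ => β * x ^ (2 * β - 1)) atTop (𝓝 0) := by
    have h0 : Tendsto (fun x : ℝ => x ^ (2 * β - 1)) atTop (𝓝 0) := by
      have := tendsto_rpow_neg_atTop (show 0 < 1 - 2 * β by linarith)
      exact this.congr fun x => by rw [show -(1 - 2*β) = 2*β - 1 by ring]
    simpa using h0.const_mul β
  refine tendsto_of_tendsto_of_tendsto_of_le_of_le' tendsto_const_nhds hupper ?_ ?_
  · filter_upwards [eventually_ge_atTop 1] with x hx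
    have hx0 : (0:ℝ) ≤ x := le_trans zero_le_one hx
    have hxb : 0 ≤ x ^ β := Real.rpow_nonneg hx0 β
    have : x ^ β ≤ (x + x ^ β) ^ β := Real.rpow_le_rpow hx0 (by linarith) hβ0.le
    linarith
  · filter_upwards [eventually_ge_atTop 1] with x hx
    have h1 := key_up hβ0 (by linarith : β ≤ 1) (Real.rpow_nonneg (by linarith) β) hx
    have h2 : x ^ β * x ^ (β - 1) = x ^ (2 * β - 1) := by
      rw [← Real.rpow_add (lt_of_lt_of_le one_pos hx)]; ring_nf
    nlinarith [Real.rpow_nonneg (le_trans zero_le_one hx : (0:ℝ) ≤ x) β]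

lemma lim_b_eq : Tendsto (fun x : ℝ => (x + x ^ (1/2 : ℝ)) ^ (1/2 : ℝ) - x ^ (1/2 : ℝ))
    atTop (𝓝 (1/2)) := by
  have hβ0 : (0:ℝ) < 1/2 := by norm_num
  have hlow : Tendsto (fun x : ℝ => (1/2 : ℝ) / (1 + x ^ ((1:ℝ)/2 - 1))) atTop (𝓝 (1/2)) := by
    have := (tendsto_const_nhds (x := (1:ℝ)) (f := atTop)).add (xpow_bm1_to_zero (by norm_num : (1:ℝ)/2 < 1))
    have h := (tendsto_const_nhds (x := (1/2:ℝ)) (f := atTop)).div this (by norm_num)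
    simpa [Pi.div_def] using h
  refine tendsto_of_tendsto_of_tendsto_of_le_of_le' hlow tendsto_const_nhds ?_ ?_
  · filter_upwards [eventually_ge_atTop 1] with x hx
    have h := key_low hβ0 (by norm_num) hx
    have h0 : (2 * (1/2 : ℝ) - 1) = 0 := by norm_num
    rw [h0, Real.rpow_zero, mul_one] at h
    convert h using 3 <;> norm_num
  · filter_upwards [eventually_ge_atTop 1] with x hx
    have h := key_up hβ0 (by norm_num) (Real.rpow_nonneg (by linarith) (1/2)) hx
    have h2 : x ^ (1/2 : ℝ) * x ^ ((1:ℝ)/2 - 1) = 1 := by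
      rw [← Real.rpow_add (lt_of_lt_of_le one_pos hx)]
      norm_num
    nlinarith

lemma lim_b_gt {β : ℝ} (hβ : 1/2 < β) (hβ1 : β < 1) :
    Tendsto (fun x : ℝ => (x + x ^ β) ^ β - x ^ β) atTop atTop := by
  have hβ0 : 0 < β := lt_trans (by norm_num) hβ
  have hup : Tendsto (fun x : ℝ => β / 2 * x ^ (2 * β - 1)) atTop atTop :=
    (tendsto_rpow_atTop (by linarith : 0 < 2 * β - 1)).const_mul_atTop (by positivity)
  refine tendsto_atTop_mono' atTop ?_ hup
  filter_upwards [eventually_ge_atTop 1] with x hx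
  have h := key_low hβ0 hβ1.le hx
  have hu1 : x ^ (β - 1) ≤ 1 :=
    Real.rpow_le_one_of_one_le_of_nonpos hx (by linarith)
  have hu0 : 0 ≤ x ^ (β - 1) := Real.rpow_nonneg (by linarith) _
  have hnum : 0 ≤ β * x ^ (2 * β - 1) := by positivity
  have : β * x ^ (2 * β - 1) / 2 ≤ β * x ^ (2 * β - 1) / (1 + x ^ (β - 1)) := by
    apply div_le_div_of_nonneg_left hnum (by linarith) (by linarith)
  calc β / 2 * x ^ (2 * β - 1) = β * x ^ (2 * β - 1) / 2 := by ring
    _ ≤ β * x ^ (2 * β - 1) / (1 + x ^ (β - 1)) := this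
    _ ≤ (x + x ^ β) ^ β - x ^ β := h

/-- The function `ψ_β(t) = exp((log t)^β)` (relevant for `t ≥ e`). -/
noncomputable def psiB (β : ℝ) : ℝ → ℝ := fun t => Real.exp (Real.log t ^ β)

lemma bridge_b {β : ℝ} {lf : Filter ℝ}
    (h2 : Tendsto (fun t => Real.exp ((Real.log t + Real.log t ^ β) ^ β - Real.log t ^ β))
      atTop lf) :
    Tendsto (fun t => psiB β (t * psiB β t) / psiB β t) atTop lf := by
  refine h2.congr' ?_
  filter_upwards [eventually_gt_atTop 0] with t ht
  simp only [psiB]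
  rw [← Real.exp_sub, Real.log_mul ht.ne' (Real.exp_ne_zero _), Real.log_exp]

lemma comp_exp_log_nhds {h : ℝ → ℝ} {L : ℝ} (hh : Tendsto h atTop (𝓝 L)) :
    Tendsto (fun t : ℝ => Real.exp (h (Real.log t))) atTop (𝓝 (Real.exp L)) :=
  (Real.continuous_exp.tendsto L).comp (hh.comp Real.tendsto_log_atTop)

lemma comp_exp_log_top {h : ℝ → ℝ} (hh : Tendsto h atTop atTop) :
    Tendsto (fun t : ℝ => Real.exp (h (Real.log t))) atTop atTop :=
  Real.tendsto_exp_atTop.comp (hh.comp Real.tendsto_log_atTop)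

/-- For `β ∈ (0,1)` and `ψ_β(t) = exp((log t)^β)`:
(a) `ψ_β(at)/ψ_β(t) → 1` for every `a > 1`;
(b) `ψ_β(t·ψ_β(t))/ψ_β(t) = exp((log t + (log t)^β)^β − (log t)^β)` tends to `1` if
`β ∈ (0,1/2)`, to `e^{1/2}` if `β = 1/2`, and to `+∞` if `β ∈ (1/2,1)`;
(c) `ψ_β(t^α)/ψ_β(t) = exp((α^β − 1)(log t)^β) → +∞` for every `α > 1`. -/
theorem stmt3 (β : ℝ) (hβ : β ∈ Set.Ioo (0:ℝ) 1) :
    (∀ a > (1:ℝ),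
      Tendsto (fun t => psiB β (a * t) / psiB β t) atTop (𝓝 1) ∧
      Tendsto (fun t => Real.exp (Real.log (a * t) ^ β - Real.log t ^ β)) atTop (𝓝 1)) ∧
    ((β < 1/2 →
        Tendsto (fun t => psiB β (t * psiB β t) / psiB β t) atTop (𝓝 1) ∧
        Tendsto (fun t =>
          Real.exp ((Real.log t + Real.log t ^ β) ^ β - Real.log t ^ β)) atTop (𝓝 1)) ∧
      (β = 1/2 →
        Tendsto (fun t => psiB β (t * psiB β t) / psiB β t) atTop (𝓝 (Real.exp (1/2))) ∧
        Tendsto (fun t =>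
          Real.exp ((Real.log t + Real.log t ^ β) ^ β - Real.log t ^ β)) atTop
          (𝓝 (Real.exp (1/2)))) ∧
      (1/2 < β →
        Tendsto (fun t => psiB β (t * psiB β t) / psiB β t) atTop atTop ∧
        Tendsto (fun t =>
          Real.exp ((Real.log t + Real.log t ^ β) ^ β - Real.log t ^ β)) atTop atTop)) ∧
    (∀ α > (1:ℝ),
      Tendsto (fun t => psiB β (t ^ α) / psiB β t) atTop atTop ∧
      Tendsto (fun t => Real.exp ((α ^ β - 1) * Real.log t ^ β)) atTop atTop) := by
  obtain ⟨hβ0, hβ1⟩ := hβ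
  refine ⟨?_, ⟨?_, ?_, ?_⟩, ?_⟩
  · -- part (a)
    intro a ha
    have hc : 0 < Real.log a := Real.log_pos ha
    have h2' := comp_exp_log_nhds (lim_exp_a hβ0 hβ1 hc.le)
    rw [Real.exp_zero] at h2'
    have h2 : Tendsto (fun t => Real.exp (Real.log (a * t) ^ β - Real.log t ^ β))
        atTop (𝓝 1) := by
      refine h2'.congr' ?_
      filter_upwards [eventually_gt_atTop 0] with t ht
      rw [Real.log_mul (ne_of_gt (lt_trans one_pos ha)) ht.ne']
    refine ⟨?_, h2⟩
    have he : (fun t => psiB β (a * t) / psiB β t) =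
        fun t => Real.exp (Real.log (a * t) ^ β - Real.log t ^ β) := by
      funext t; simp [psiB, Real.exp_sub]
    rw [he]; exact h2
  · -- (b) β < 1/2
    intro hb
    have h2' := comp_exp_log_nhds (lim_b_lt hβ0 hb)
    rw [Real.exp_zero] at h2'
    exact ⟨bridge_b h2', h2'⟩
  · -- (b) β = 1/2
    intro hb
    subst hb
    have h2' := comp_exp_log_nhds lim_b_eq
    exact ⟨bridge_b h2', h2'⟩
  · -- (b) β > 1/2
    intro hb
    have h2' := comp_exp_log_top (lim_b_gt hb hβ1)
    exact ⟨bridge_b h2', h2'⟩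
  · -- part (c)
    intro α hα
    have hα0 : (0:ℝ) < α := lt_trans one_pos hα
    have h1 : 1 < α ^ β := (Real.one_lt_rpow_iff_of_pos hα0).mpr (Or.inl ⟨hα, hβ0⟩)
    have hg : Tendsto (fun x : ℝ => (α ^ β - 1) * x ^ β) atTop atTop :=
      (tendsto_rpow_atTop hβ0).const_mul_atTop (by linarith)
    have h2 := comp_exp_log_top hg
    refine ⟨?_, h2⟩
    refine h2.congr' ?_
    filter_upwards [eventually_ge_atTop 1] with t ht
    have ht0 : (0:ℝ) < t := lt_of_lt_of_le one_pos ht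
    simp only [psiB]
    rw [← Real.exp_sub, Real.log_rpow ht0,
      Real.mul_rpow hα0.le (Real.log_nonneg ht), sub_mul, one_mul]
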